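/- Let C be a small category and let S = ⟨S₀, (c_s)_{s ∈ S₀}⟩ be an object of the wreath product C ≀ Γ. Then the slice category (C ≀ Γ)/S of objects of C ≀ Γ equipped with a morphism to S is equivalent to the wreath product (C/S) ≀ Γ, where C/S is the category whose objects are pairs (c, φ) of an object c of C and a morphism φ : j(c) → S in C ≀ Γ (equivalently, an element s ∈ S₀ together with a morphism c → c_s in C), and whose morphisms (c, φ) → (c', φ') are morphisms ψ : c → c' in C with φ' ∘ j(ψ) = φ. -/

import Mathlib

/-!
STATEMENT 5: Let C be a small category and let S = ⟨S₀, (c_s)_{s ∈ S₀}⟩ be an object of the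
wreath product C ≀ Γ. Then the slice category (C ≀ Γ)/S is equivalent to the wreath product
(C/S) ≀ Γ, where C/S is the category of pairs (c, φ : j(c) → S) — i.e. the costructured
arrow category of the embedding j : C → C ≀ Γ over S.
-/

open CategoryTheory

universe v u

/-- The wreath product `C ≀ Γ`: objects are pairs of a finite set and a family of objects
of `C` indexed by it. -/
structure Wreath (C : Type u) [Category.{v} C] : Type (max u 1) where
  ι : Type
  [fin : Fintype ι]
  obj : ι → C

attribute [instance] Wreath.fin

variable {C : Type u} [Category.{v} C]

/-- Morphisms in the wreath product: a map of index sets together with a family of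
morphisms of `C`. -/
structure WreathHom (X Y : Wreath C) : Type (max 1 v) where
  map : X.ι → Y.ι
  hom : ∀ s, X.obj s ⟶ Y.obj (map s)

theorem WreathHom.ext' {X Y : Wreath C}
    {f g : WreathHom X Y} (h1 : f.map = g.map) (h2 : HEq f.hom g.hom) : f = g := by
  cases f; cases g
  cases h1; cases h2; rfl

instance : Quiver (Wreath C) := ⟨WreathHom⟩

instance : CategoryStruct (Wreath C) where
  id X := WreathHom.mk (fun s => s) (fun s => 𝟙 _)
  comp f g := WreathHom.mk (fun s => g.map (f.map s)) (fun s => f.hom s ≫ g.hom (f.map s))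

instance wreathCategory : Category (Wreath C) where
  id_comp f := WreathHom.ext' rfl (heq_of_eq (funext fun s => Category.id_comp _))
  comp_id f := WreathHom.ext' rfl (heq_of_eq (funext fun s => Category.comp_id _))
  assoc f g h := WreathHom.ext' rfl (heq_of_eq (funext fun s => Category.assoc _ _ _))

/-- The full embedding `j : C → C ≀ Γ` sending `c` to the one-element family `c`. -/
def wreathEmbedding (C : Type u) [Category.{v} C] : C ⥤ Wreath C where
  obj c := ⟨PUnit, fun _ => c⟩
  map f := WreathHom.mk (fun s => s) (fun _ => f)
  map_id _ := rfl
  map_comp _ _ := rfl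

/-- For `S : C ≀ Γ`, the category `C/S` of pairs `(c, φ : j(c) → S)` of an object of `C`
and a morphism `j(c) → S` in `C ≀ Γ`, with morphisms `ψ : c → c'` satisfying
`φ' ∘ j(ψ) = φ`: this is the costructured arrow category of `j` over `S`. -/
abbrev WreathSlice (S : Wreath C) :=
  CostructuredArrow (wreathEmbedding C) S

section
open CategoryTheory
variable {C : Type u} [Category.{v} C]

theorem WreathHom.ext2 {X Y : Wreath C} {f g : WreathHom X Y}
    (h1 : ∀ s, f.map s = g.map s) (h2 : ∀ s, HEq (f.hom s) (g.hom s)) : f = g := by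
  obtain ⟨fm, fh⟩ := f; obtain ⟨gm, gh⟩ := g
  obtain rfl : fm = gm := funext h1
  simp only [heq_eq_eq] at h2
  exact congrArg _ (funext h2)

theorem WreathHom.congr_map {X Y : Wreath C} {f g : WreathHom X Y} (h : f = g) (s : X.ι) :
    f.map s = g.map s := by rw [h]

theorem WreathHom.congr_hom {X Y : Wreath C} {f g : WreathHom X Y} (h : f = g) (s : X.ι) :
    HEq (f.hom s) (g.hom s) := by rw [h]

variable (S : Wreath C)

/-- The functor `(C ≀ Γ)/S ⥤ (C/S) ≀ Γ`. -/
def sliceToWreath : Over S ⥤ Wreath (WreathSlice S) where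
  obj X := ⟨X.left.ι, fun s => CostructuredArrow.mk
    (Y := X.left.obj s) (⟨fun _ => X.hom.map s, fun _ => X.hom.hom s⟩ : _ ⟶ S)⟩
  map {X Y} g := ⟨g.left.map, fun s => CostructuredArrow.homMk (g.left.hom s) (by
    have h : g.left ≫ Y.hom = X.hom := Over.w g
    exact WreathHom.ext2 (fun _ => WreathHom.congr_map h s)
      (fun _ => WreathHom.congr_hom h s))⟩
  map_id X := rfl
  map_comp f g := rfl

/-- The functor `(C/S) ≀ Γ ⥤ (C ≀ Γ)/S`. -/
def wreathToSlice : Wreath (WreathSlice S) ⥤ Over S where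
  obj W := Over.mk (show (⟨W.ι, fun s => (W.obj s).left⟩ : Wreath C) ⟶ S from
    ⟨fun s => (W.obj s).hom.map PUnit.unit, fun s => (W.obj s).hom.hom PUnit.unit⟩)
  map {W W'} g := Over.homMk (show (⟨W.ι, fun s => (W.obj s).left⟩ : Wreath C) ⟶
      ⟨W'.ι, fun s => (W'.obj s).left⟩ from ⟨g.map, fun s => (g.hom s).left⟩) (by
    refine WreathHom.ext2 (fun s => ?_) (fun s => ?_)
    · exact WreathHom.congr_map (CostructuredArrow.w (g.hom s)) PUnit.unit
    · exact WreathHom.congr_hom (CostructuredArrow.w (g.hom s)) PUnit.unit)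
  map_id W := rfl
  map_comp f g := rfl

end

theorem stmt5 (C : Type u) [Category.{v} C] (S : Wreath C) :
    Nonempty (Over S ≌ Wreath (WreathSlice S)) := by
  exact ⟨⟨sliceToWreath S, wreathToSlice S,
    NatIso.ofComponents (fun X => Iso.refl _) (by intros; simp only [Iso.refl_hom, Functor.id_map, Functor.comp_map, Functor.id_obj, Functor.comp_obj, Category.comp_id, Category.id_comp]; exact (Category.comp_id _).trans (Category.id_comp _).symm),
    NatIso.ofComponents (fun W => Iso.refl _) (by intros; simp only [Iso.refl_hom, Functor.id_map, Functor.comp_map, Functor.id_obj, Functor.comp_obj, Category.comp_id, Category.id_comp]; exact (Category.comp_id _).trans (Category.id_comp _).symm), by intros; exact Category.comp_id _⟩⟩
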